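/- Let a, f ∈ ℝ and Z₀ = (0,0,−1). Suppose q̃ = (x̃,ỹ) : I → ℝ² is a C² curve satisfying the planar Hooke equation d²q̃/dt² = 2f · q̃ (which is the equation of motion of the Hooke problem with force function f‖q̃‖_a² for every choice of a). Let τ ↦ t(τ) solve dt/dτ = x̃(t)² + ỹ(t)² + 1 and set q(τ) := π(q̃(t(τ))). Then for every τ, q''(τ) − ⟨q''(τ), q(τ)⟩ q(τ) = −2f · ⟨q(τ),Z₀⟩^{−3} · (Z₀ − ⟨q(τ),Z₀⟩ q(τ)); i.e., the central projection carries solutions of the planar Hooke problem to solutions of the spherical Hooke problem with force function f tan² θ_{Z₀} on the southern hemisphere. -/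

import Mathlib

noncomputable section

/-- The affine norm `‖(x,y)‖ₐ = √(x² + y²/(1+a²))` on the plane. -/
def normA (a : ℝ) (p : ℝ × ℝ) : ℝ := Real.sqrt (p.1 ^ 2 + p.2 ^ 2 / (1 + a ^ 2))

/-- Central projection from the plane `{z = -1}` (identified with `ℝ²`) onto the
open southern hemisphere of the unit sphere in `ℝ³`. -/
def centralProj (p : ℝ × ℝ) : ℝ × ℝ × ℝ :=
  (Real.sqrt (p.1 ^ 2 + p.2 ^ 2 + 1))⁻¹ • (p.1, p.2, (-1 : ℝ))

/-- The Euclidean dot product on `ℝ³ = ℝ × ℝ × ℝ`. -/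
def dot3 (u v : ℝ × ℝ × ℝ) : ℝ := u.1 * v.1 + u.2.1 * v.2.1 + u.2.2 * v.2.2

lemma aux2 (f : ℝ) (X Y P W R K : ℝ → ℝ)
    (hRpos : ∀ τ, 0 < R τ)
    (hR2 : ∀ τ, R τ ^ 2 = X τ ^ 2 + Y τ ^ 2 + 1)
    (hXd : ∀ τ, HasDerivAt X (R τ ^ 2 * P τ) τ)
    (hYd : ∀ τ, HasDerivAt Y (R τ ^ 2 * W τ) τ)
    (hPd : ∀ τ, HasDerivAt P (R τ ^ 2 * (2 * f * X τ)) τ)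
    (hWd : ∀ τ, HasDerivAt W (R τ ^ 2 * (2 * f * Y τ)) τ)
    (hRd : ∀ τ, HasDerivAt R (R τ * K τ) τ)
    (hKd : ∀ τ, HasDerivAt K
      (R τ ^ 2 * (P τ ^ 2 + W τ ^ 2) + 2 * f * R τ ^ 2 * (X τ ^ 2 + Y τ ^ 2)) τ)
    (Q : ℝ → ℝ × ℝ × ℝ)
    (hQ : Q = fun τ => ((R τ)⁻¹ * X τ, (R τ)⁻¹ * Y τ, (R τ)⁻¹ * (-1))) :
    ∀ τ, deriv (deriv Q) τ - dot3 (deriv (deriv Q) τ) (Q τ) • Q τ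
      = (-(2 * f) / (dot3 (Q τ) ((0:ℝ), (0:ℝ), (-1:ℝ))) ^ 3) •
        (((0:ℝ), (0:ℝ), (-1:ℝ)) - dot3 (Q τ) ((0:ℝ), (0:ℝ), (-1:ℝ)) • Q τ) := by
  have hR0 : ∀ τ, R τ ≠ 0 := fun τ => ne_of_gt (hRpos τ)
  -- first derivatives of the components of Q
  have hV1 : ∀ τ, HasDerivAt (fun τ => (R τ)⁻¹ * X τ)
      (R τ * P τ - X τ * K τ / R τ) τ := by
    intro τ
    have h := (((hRd τ).inv (hR0 τ)).mul (hXd τ))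
    refine h.congr_deriv ?_
    simp only [Pi.inv_apply, Pi.mul_apply]
    field_simp [hR0 τ]
    ring
  have hV2 : ∀ τ, HasDerivAt (fun τ => (R τ)⁻¹ * Y τ)
      (R τ * W τ - Y τ * K τ / R τ) τ := by
    intro τ
    have h := (((hRd τ).inv (hR0 τ)).mul (hYd τ))
    refine h.congr_deriv ?_
    simp only [Pi.inv_apply, Pi.mul_apply]
    field_simp [hR0 τ]
    ring
  have hV3 : ∀ τ, HasDerivAt (fun τ => (R τ)⁻¹ * (-1 : ℝ)) (K τ / R τ) τ := by
    intro τ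
    have h := ((hRd τ).inv (hR0 τ)).mul_const (-1 : ℝ)
    refine h.congr_deriv ?_
    field_simp [hR0 τ]
  have hQd : ∀ τ, HasDerivAt Q
      (R τ * P τ - X τ * K τ / R τ, R τ * W τ - Y τ * K τ / R τ, K τ / R τ) τ := by
    intro τ
    rw [hQ]
    exact (hV1 τ).prodMk ((hV2 τ).prodMk (hV3 τ))
  have hdQ : deriv Q = fun τ =>
      ((R τ * P τ - X τ * K τ / R τ, R τ * W τ - Y τ * K τ / R τ, K τ / R τ) : ℝ × ℝ × ℝ) :=
    funext fun τ => (hQd τ).deriv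
  -- second derivatives
  have hE1 : ∀ τ, HasDerivAt (fun τ => R τ * P τ - X τ * K τ / R τ)
      (2 * f * X τ * R τ ^ 3 - X τ * R τ * (P τ ^ 2 + W τ ^ 2)
        - 2 * f * X τ * R τ * (X τ ^ 2 + Y τ ^ 2) + X τ * K τ ^ 2 / R τ) τ := by
    intro τ
    have h := ((hRd τ).mul (hPd τ)).sub
      (((hXd τ).mul (hKd τ)).div (hRd τ) (hR0 τ))
    refine h.congr_deriv ?_
    simp only [Pi.inv_apply, Pi.mul_apply]
    field_simp [hR0 τ]
    ring
  have hE2 : ∀ τ, HasDerivAt (fun τ => R τ * W τ - Y τ * K τ / R τ)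
      (2 * f * Y τ * R τ ^ 3 - Y τ * R τ * (P τ ^ 2 + W τ ^ 2)
        - 2 * f * Y τ * R τ * (X τ ^ 2 + Y τ ^ 2) + Y τ * K τ ^ 2 / R τ) τ := by
    intro τ
    have h := ((hRd τ).mul (hWd τ)).sub
      (((hYd τ).mul (hKd τ)).div (hRd τ) (hR0 τ))
    refine h.congr_deriv ?_
    simp only [Pi.inv_apply, Pi.mul_apply]
    field_simp [hR0 τ]
    ring
  have hE3 : ∀ τ, HasDerivAt (fun τ => K τ / R τ)
      (R τ * (P τ ^ 2 + W τ ^ 2) + 2 * f * R τ * (X τ ^ 2 + Y τ ^ 2)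
        - K τ ^ 2 / R τ) τ := by
    intro τ
    have h := (hKd τ).div (hRd τ) (hR0 τ)
    refine h.congr_deriv ?_
    field_simp [hR0 τ]
  have hddQ : ∀ τ, deriv (deriv Q) τ =
      (2 * f * X τ * R τ ^ 3 - X τ * R τ * (P τ ^ 2 + W τ ^ 2)
        - 2 * f * X τ * R τ * (X τ ^ 2 + Y τ ^ 2) + X τ * K τ ^ 2 / R τ,
       2 * f * Y τ * R τ ^ 3 - Y τ * R τ * (P τ ^ 2 + W τ ^ 2)
        - 2 * f * Y τ * R τ * (X τ ^ 2 + Y τ ^ 2) + Y τ * K τ ^ 2 / R τ,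
       R τ * (P τ ^ 2 + W τ ^ 2) + 2 * f * R τ * (X τ ^ 2 + Y τ ^ 2)
        - K τ ^ 2 / R τ) := by
    intro τ
    rw [hdQ]
    exact ((hE1 τ).prodMk ((hE2 τ).prodMk (hE3 τ))).deriv
  intro τ
  rw [hddQ τ]
  simp only [hQ]
  -- abbreviations as plain reals
  have hr0 := hR0 τ
  have hr2 := hR2 τ
  simp only [dot3, Prod.smul_def, smul_eq_mul, Prod.mk_sub_mk, Prod.mk.injEq]
  set x := X τ with hx
  set y := Y τ with hy
  set p := P τ with hp
  set w := W τ with hw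
  set r := R τ with hr
  set k := K τ with hk
  have hdot : (2*f*x*r^3 - x*r*(p^2+w^2) - 2*f*x*r*(x^2+y^2) + x*k^2/r) * (r⁻¹*x)
      + (2*f*y*r^3 - y*r*(p^2+w^2) - 2*f*y*r*(x^2+y^2) + y*k^2/r) * (r⁻¹*y)
      + (r*(p^2+w^2) + 2*f*r*(x^2+y^2) - k^2/r) * (r⁻¹*(-1))
      = (2*f*r^3 - r*(p^2+w^2) - 2*f*r*(x^2+y^2) + k^2/r) * r - 2*f*r^2 := by
    calc (2*f*x*r^3 - x*r*(p^2+w^2) - 2*f*x*r*(x^2+y^2) + x*k^2/r) * (r⁻¹*x)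
        + (2*f*y*r^3 - y*r*(p^2+w^2) - 2*f*y*r*(x^2+y^2) + y*k^2/r) * (r⁻¹*y)
        + (r*(p^2+w^2) + 2*f*r*(x^2+y^2) - k^2/r) * (r⁻¹*(-1))
        = r⁻¹ * ((2*f*r^3 - r*(p^2+w^2) - 2*f*r*(x^2+y^2) + k^2/r) * (x^2+y^2+1)
            - 2*f*r^3) := by ring
      _ = r⁻¹ * ((2*f*r^3 - r*(p^2+w^2) - 2*f*r*(x^2+y^2) + k^2/r) * (r^2)
            - 2*f*r^3) := by rw [hr2]
      _ = (2*f*r^3 - r*(p^2+w^2) - 2*f*r*(x^2+y^2) + k^2/r) * r - 2*f*r^2 := by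
            field_simp
  rw [show (r⁻¹*(-1) : ℝ) = r⁻¹ * (-1) from rfl] at hdot
  rw [hdot]
  refine ⟨?_, ?_, ?_⟩ <;> · field_simp
                            ring

lemma aux (f : ℝ) (X Y P W : ℝ → ℝ)
    (hXd : ∀ τ, HasDerivAt X (P τ * (X τ ^ 2 + Y τ ^ 2 + 1)) τ)
    (hYd : ∀ τ, HasDerivAt Y (W τ * (X τ ^ 2 + Y τ ^ 2 + 1)) τ)
    (hPd : ∀ τ, HasDerivAt P (2 * f * X τ * (X τ ^ 2 + Y τ ^ 2 + 1)) τ)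
    (hWd : ∀ τ, HasDerivAt W (2 * f * Y τ * (X τ ^ 2 + Y τ ^ 2 + 1)) τ)
    (Q : ℝ → ℝ × ℝ × ℝ) (hQ : Q = fun τ => centralProj (X τ, Y τ)) :
    ∀ τ, deriv (deriv Q) τ - dot3 (deriv (deriv Q) τ) (Q τ) • Q τ
      = (-(2 * f) / (dot3 (Q τ) ((0:ℝ), (0:ℝ), (-1:ℝ))) ^ 3) •
        (((0:ℝ), (0:ℝ), (-1:ℝ)) - dot3 (Q τ) ((0:ℝ), (0:ℝ), (-1:ℝ)) • Q τ) := by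
  have hSpos : ∀ τ, (0:ℝ) < X τ ^ 2 + Y τ ^ 2 + 1 := fun τ => by positivity
  have hSd : ∀ τ, HasDerivAt (fun τ => X τ ^ 2 + Y τ ^ 2 + 1)
      (2 * (X τ * P τ + Y τ * W τ) * (X τ ^ 2 + Y τ ^ 2 + 1)) τ := by
    intro τ
    have h := (((hXd τ).pow 2).add ((hYd τ).pow 2)).add_const 1
    refine h.congr_deriv ?_
    ring
  refine aux2 f X Y P W (fun τ => Real.sqrt (X τ ^ 2 + Y τ ^ 2 + 1))
    (fun τ => X τ * P τ + Y τ * W τ)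
    (fun τ => Real.sqrt_pos.2 (hSpos τ))
    (fun τ => Real.sq_sqrt (hSpos τ).le) ?_ ?_ ?_ ?_ ?_ ?_ Q ?_
  · intro τ
    show HasDerivAt X (Real.sqrt (X τ ^ 2 + Y τ ^ 2 + 1) ^ 2 * P τ) τ
    rw [Real.sq_sqrt (hSpos τ).le, mul_comm]
    exact hXd τ
  · intro τ
    show HasDerivAt Y (Real.sqrt (X τ ^ 2 + Y τ ^ 2 + 1) ^ 2 * W τ) τ
    rw [Real.sq_sqrt (hSpos τ).le, mul_comm]
    exact hYd τ
  · intro τ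
    show HasDerivAt P (Real.sqrt (X τ ^ 2 + Y τ ^ 2 + 1) ^ 2 * (2 * f * X τ)) τ
    rw [Real.sq_sqrt (hSpos τ).le, mul_comm]
    exact hPd τ
  · intro τ
    show HasDerivAt W (Real.sqrt (X τ ^ 2 + Y τ ^ 2 + 1) ^ 2 * (2 * f * Y τ)) τ
    rw [Real.sq_sqrt (hSpos τ).le, mul_comm]
    exact hWd τ
  · intro τ
    have h := (Real.hasDerivAt_sqrt (hSpos τ).ne').comp τ (hSd τ)
    show HasDerivAt (fun τ => Real.sqrt (X τ ^ 2 + Y τ ^ 2 + 1))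
      (Real.sqrt (X τ ^ 2 + Y τ ^ 2 + 1) * (X τ * P τ + Y τ * W τ)) τ
    refine h.congr_deriv ?_
    have hs := Real.sq_sqrt (hSpos τ).le
    have h0 : Real.sqrt (X τ ^ 2 + Y τ ^ 2 + 1) ≠ 0 := (Real.sqrt_pos.2 (hSpos τ)).ne'
    field_simp
    linear_combination (-(X τ * P τ + Y τ * W τ)) * hs
  · intro τ
    have h := ((hXd τ).mul (hPd τ)).add ((hYd τ).mul (hWd τ))
    show HasDerivAt (fun τ => X τ * P τ + Y τ * W τ)
      (Real.sqrt (X τ ^ 2 + Y τ ^ 2 + 1) ^ 2 * (P τ ^ 2 + W τ ^ 2)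
        + 2 * f * Real.sqrt (X τ ^ 2 + Y τ ^ 2 + 1) ^ 2 * (X τ ^ 2 + Y τ ^ 2)) τ
    rw [Real.sq_sqrt (hSpos τ).le]
    refine h.congr_deriv ?_
    ring
  · rw [hQ]
    rfl

theorem hooke_central_projection_sphere
    (a f : ℝ)
    (Z0 : ℝ × ℝ × ℝ) (hZ0 : Z0 = ((0 : ℝ), (0 : ℝ), (-1 : ℝ)))
    (qt : ℝ → ℝ × ℝ) (hC2 : ContDiff ℝ 2 qt)
    (hODE : ∀ s, deriv (deriv qt) s = (2 * f) • qt s)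
    (t : ℝ → ℝ)
    (ht : ∀ τ, HasDerivAt t ((qt (t τ)).1 ^ 2 + (qt (t τ)).2 ^ 2 + 1) τ)
    (q : ℝ → ℝ × ℝ × ℝ) (hq : q = fun τ => centralProj (qt (t τ))) :
    ∀ τ, deriv (deriv q) τ - dot3 (deriv (deriv q) τ) (q τ) • q τ
      = (-(2 * f) / (dot3 (q τ) Z0) ^ 3) • (Z0 - dot3 (q τ) Z0 • q τ) := by
  subst hZ0
  have hqt : Differentiable ℝ qt := hC2.differentiable (by norm_num)
  have hqt' : Differentiable ℝ (deriv qt) := by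
    have h' : ContDiff ℝ ((1:ℕ∞)+1) qt := by exact_mod_cast hC2
    rw [contDiff_succ_iff_deriv] at h'
    exact h'.2.2.differentiable (by norm_num)
  have hx : ∀ s, HasDerivAt (fun u => (qt u).1) ((deriv qt s).1) s :=
    fun s => (hasFDerivAt_fst (𝕜 := ℝ) (p := qt s)).comp_hasDerivAt s (hqt s).hasDerivAt
  have hy : ∀ s, HasDerivAt (fun u => (qt u).2) ((deriv qt s).2) s :=
    fun s => (hasFDerivAt_snd (𝕜 := ℝ) (p := qt s)).comp_hasDerivAt s (hqt s).hasDerivAt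
  have hp : ∀ s, HasDerivAt (fun u => (deriv qt u).1) (2 * f * (qt s).1) s := by
    intro s
    have h := (hasFDerivAt_fst).comp_hasDerivAt s (hqt' s).hasDerivAt
    rw [hODE s] at h
    simp at h
    exact h
  have hw : ∀ s, HasDerivAt (fun u => (deriv qt u).2) (2 * f * (qt s).2) s := by
    intro s
    have h := (hasFDerivAt_snd).comp_hasDerivAt s (hqt' s).hasDerivAt
    rw [hODE s] at h
    simp at h
    exact h
  subst hq
  exact aux f (fun τ => (qt (t τ)).1) (fun τ => (qt (t τ)).2)
    (fun τ => (deriv qt (t τ)).1) (fun τ => (deriv qt (t τ)).2)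
    (fun τ => (hx (t τ)).comp τ (ht τ))
    (fun τ => (hy (t τ)).comp τ (ht τ))
    (fun τ => (hp (t τ)).comp τ (ht τ))
    (fun τ => (hw (t τ)).comp τ (ht τ))
    (fun τ => centralProj (qt (t τ))) rfl
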